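/- Let λ ∈ ℝ with λ ≠ 0, T > 0, B > 0. Let w : [0,T] → ℝ be continuous with w(t) > 0 for all t and ∫₀ᵀ w(t)^{−2} dt ≤ B, and let U, u : [0,T] → ℝ be differentiable with U'(t) = λ·U(t) + w(t), u'(t) = λ·u(t) for all t ∈ [0,T], and U(0) = u(0). Then |U(T) − u(T)| ≥ B^{−1/2}·( 3(e^{2λT/3} − 1)/(2λ) )^{3/2}. -/

import Mathlib

open MeasureTheory Set

private lemma key_amgm {g a b : ℝ} (hg : 0 < g) (ha : 0 < a) (hb : 0 < b)
    (h : g ^ 3 = a ^ 2 * b) : g ≤ (2 * a + b) / 3 := by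
  have h27 : g ^ 3 ≤ ((2 * a + b) / 3) ^ 3 := by
    rw [h]
    nlinarith [sq_nonneg (a - b), mul_pos ha hb, mul_pos ha ha, ha.le, hb.le,
      mul_nonneg (mul_nonneg (sq_nonneg (a-b)) ha.le) (by norm_num : (0:ℝ) ≤ 8),
      mul_nonneg (sq_nonneg (a-b)) hb.le]
  exact le_of_pow_le_pow_left₀ (by norm_num) (by positivity) h27

/-- (Proposition 1 of the paper, worst case `w > 0`.) If `U' = λU + w`,
`u' = λu` on `[0,T]`, `U 0 = u 0`, with continuous positive residual `w` satisfying the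
budget `∫₀ᵀ (w t)⁻² dt ≤ B`, then `|U T − u T| ≥ B^{−1/2} (3(e^{2λT/3} − 1)/(2λ))^{3/2}`. -/
theorem stmt_3 (lam T B : ℝ) (hlam : lam ≠ 0) (hT : 0 < T) (hB : 0 < B)
    (w U u : ℝ → ℝ) (hw : ContinuousOn w (Icc 0 T))
    (hwpos : ∀ t ∈ Icc (0:ℝ) T, 0 < w t)
    (hbudget : (∫ t in (0:ℝ)..T, (w t ^ 2)⁻¹) ≤ B)
    (hU : ∀ t ∈ Icc (0:ℝ) T, HasDerivAt U (lam * U t + w t) t)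
    (hu : ∀ t ∈ Icc (0:ℝ) T, HasDerivAt u (lam * u t) t)
    (h0 : U 0 = u 0) :
    B ^ (-(1:ℝ)/2) * (3 * (Real.exp (2 * lam * T / 3) - 1) / (2 * lam)) ^ ((3:ℝ)/2) ≤
      |U T - u T| := by
  have hIcc : uIcc (0:ℝ) T = Icc 0 T := uIcc_of_le hT.le
  -- error function
  set e : ℝ → ℝ := fun t => U t - u t with he_def
  have he : ∀ t ∈ Icc (0:ℝ) T, HasDerivAt e (lam * e t + w t) t := by
    intro t ht
    have h2 := (hU t ht).sub (hu t ht)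
    refine h2.congr_deriv ?_
    simp only [he_def]
    ring
  -- integrating factor
  set g : ℝ → ℝ := fun t => Real.exp (-lam * t) * e t with hg_def
  have hg : ∀ t ∈ Icc (0:ℝ) T, HasDerivAt g (Real.exp (-lam * t) * w t) t := by
    intro t ht
    have hexp : HasDerivAt (fun s : ℝ => Real.exp (-lam * s))
        (Real.exp (-lam * t) * (-lam)) t := by
      simpa [mul_comm] using (((hasDerivAt_id t).const_mul (-lam)).exp)
    have h2 := hexp.mul (he t ht)
    refine h2.congr_deriv ?_
    ring
  -- integrabilities
  have hwint : IntervalIntegrable w volume 0 T :=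
    (hIcc ▸ hw : ContinuousOn w (uIcc 0 T)).intervalIntegrable
  have hcont1 : ContinuousOn (fun t => Real.exp (-lam * t) * w t) (uIcc 0 T) := by
    rw [hIcc]
    exact ((Real.continuous_exp.comp (continuous_const.mul continuous_id)).continuousOn).mul hw
  have hint1 : IntervalIntegrable (fun t => Real.exp (-lam * t) * w t) volume 0 T :=
    hcont1.intervalIntegrable
  have hcontf : ContinuousOn (fun t => Real.exp (lam * (T - t)) * w t) (uIcc 0 T) := by
    rw [hIcc]
    exact ((Real.continuous_exp.comp (continuous_const.mul (continuous_const.sub continuous_id))).continuousOn).mul hw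
  have hintf : IntervalIntegrable (fun t => Real.exp (lam * (T - t)) * w t) volume 0 T :=
    hcontf.intervalIntegrable
  have hintw2 : IntervalIntegrable (fun t => (w t ^ 2)⁻¹) volume 0 T := by
    apply ContinuousOn.intervalIntegrable
    rw [hIcc]
    exact (hw.pow 2).inv₀ fun t ht => (pow_pos (hwpos t ht) 2).ne'
  -- FTC
  have hFTC : (∫ t in (0:ℝ)..T, Real.exp (-lam * t) * w t) = g T - g 0 := by
    apply intervalIntegral.integral_eq_sub_of_hasDerivAt
    · intro t ht
      exact hg t (hIcc ▸ ht)
    · exact hint1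
  have hg0 : g 0 = 0 := by simp [hg_def, he_def, h0]
  -- the error at T
  set I : ℝ := ∫ t in (0:ℝ)..T, Real.exp (lam * (T - t)) * w t with hI_def
  have hIeq : I = Real.exp (lam * T) * ∫ t in (0:ℝ)..T, Real.exp (-lam * t) * w t := by
    rw [← intervalIntegral.integral_const_mul]
    apply intervalIntegral.integral_congr
    intro t _
    simp only
    rw [← mul_assoc, ← Real.exp_add]
    ring_nf
  have heT : e T = I := by
    rw [hIeq, hFTC, hg0, sub_zero]
    simp only [hg_def]
    rw [← mul_assoc, ← Real.exp_add]
    ring_nf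
    simp
  have hI : 0 < I := by
    rw [hI_def]
    apply intervalIntegral.intervalIntegral_pos_of_pos_on hintf _ hT
    intro t ht
    exact mul_pos (Real.exp_pos _) (hwpos t ⟨ht.1.le, ht.2.le⟩)
  -- the integral A
  set c : ℝ := 2 * lam / 3 with hc_def
  have hc : c ≠ 0 := by
    simp only [hc_def]
    intro h
    apply hlam
    linarith [h]
  set A : ℝ := ∫ t in (0:ℝ)..T, Real.exp (c * (T - t)) with hA_def
  have hcontA : ContinuousOn (fun t => Real.exp (c * (T - t))) (uIcc 0 T) :=
    (Real.continuous_exp.comp (continuous_const.mul (continuous_const.sub continuous_id))).continuousOn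
  have hintA : IntervalIntegrable (fun t => Real.exp (c * (T - t))) volume 0 T :=
    hcontA.intervalIntegrable
  have hAval : A = (Real.exp (c * T) - 1) / c := by
    rw [hA_def]
    have hderiv : ∀ t ∈ uIcc (0:ℝ) T,
        HasDerivAt (fun s => -(1 / c) * Real.exp (c * (T - s))) (Real.exp (c * (T - t))) t := by
      intro t _
      have h1 : HasDerivAt (fun s : ℝ => c * (T - s)) (-c) t := by
        simpa using (((hasDerivAt_id t).const_sub T).const_mul c)
      have h2 := (h1.exp).const_mul (-(1 / c))
      refine h2.congr_deriv ?_
      rw [mul_comm (Real.exp _) (-c), ← mul_assoc, neg_mul_neg, one_div, inv_mul_cancel₀ hc, one_mul]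
    rw [intervalIntegral.integral_eq_sub_of_hasDerivAt hderiv hintA]
    field_simp
    ring_nf
    rw [Real.exp_zero]
  have hApos : 0 < A := by
    rw [hA_def]
    apply intervalIntegral.intervalIntegral_pos_of_pos_on hintA _ hT
    intro t _
    exact Real.exp_pos _
  -- choose theta
  set θ : ℝ := (B / I) ^ ((1:ℝ)/3) with hθ_def
  have hθ : 0 < θ := Real.rpow_pos_of_pos (div_pos hB hI) _
  have hθ3 : θ ^ 3 = B / I := by
    rw [hθ_def, ← Real.rpow_natCast ((B / I) ^ ((1:ℝ)/3)) 3,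
      ← Real.rpow_mul (div_pos hB hI).le]
    norm_num
  -- pointwise AM-GM bound
  have hpt : ∀ t ∈ Icc (0:ℝ) T, Real.exp (c * (T - t)) ≤
      ((2 * θ) * (Real.exp (lam * (T - t)) * w t) + (θ ^ 2)⁻¹ * (w t ^ 2)⁻¹) / 3 := by
    intro t ht
    have hwpos' := hwpos t ht
    have h1 : Real.exp (c * (T - t)) ^ 3 =
        (θ * (Real.exp (lam * (T - t)) * w t)) ^ 2 * ((θ ^ 2)⁻¹ * (w t ^ 2)⁻¹) := by
      have e3 : Real.exp (c * (T - t)) ^ 3 = Real.exp (3 * (c * (T - t))) := by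
        rw [← Real.exp_nat_mul]; norm_num
      have e2 : Real.exp (lam * (T - t)) ^ 2 = Real.exp (2 * (lam * (T - t))) := by
        rw [← Real.exp_nat_mul]; norm_num
      rw [e3]
      have harg : 3 * (c * (T - t)) = 2 * (lam * (T - t)) := by
        simp only [hc_def]; ring
      rw [harg, ← e2]
      field_simp
    have h2 := key_amgm (Real.exp_pos _)
      (mul_pos hθ (mul_pos (Real.exp_pos _) hwpos'))
      (mul_pos (inv_pos.2 (pow_pos hθ 2)) (inv_pos.2 (pow_pos hwpos' 2))) h1
    calc Real.exp (c * (T - t)) ≤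
        (2 * (θ * (Real.exp (lam * (T - t)) * w t)) + (θ ^ 2)⁻¹ * (w t ^ 2)⁻¹) / 3 := h2
      _ = ((2 * θ) * (Real.exp (lam * (T - t)) * w t) + (θ ^ 2)⁻¹ * (w t ^ 2)⁻¹) / 3 := by
          ring
  -- integrate the pointwise bound
  have hRHSint : IntervalIntegrable (fun t =>
      ((2 * θ) * (Real.exp (lam * (T - t)) * w t) + (θ ^ 2)⁻¹ * (w t ^ 2)⁻¹) / 3)
      volume 0 T :=
    ((hintf.const_mul (2 * θ)).add (hintw2.const_mul ((θ ^ 2)⁻¹))).div_const 3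
  have hmono : A ≤ ((2 * θ) * I + (θ ^ 2)⁻¹ * ∫ t in (0:ℝ)..T, (w t ^ 2)⁻¹) / 3 := by
    have h1 := intervalIntegral.integral_mono_on hT.le hintA hRHSint hpt
    rw [hA_def]
    calc (∫ t in (0:ℝ)..T, Real.exp (c * (T - t))) ≤ _ := h1
      _ = ((2 * θ) * I + (θ ^ 2)⁻¹ * ∫ t in (0:ℝ)..T, (w t ^ 2)⁻¹) / 3 := by
        rw [intervalIntegral.integral_div,
          intervalIntegral.integral_add (hintf.const_mul (2 * θ))
            (hintw2.const_mul ((θ ^ 2)⁻¹)),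
          intervalIntegral.integral_const_mul, intervalIntegral.integral_const_mul]
  have hθB : (θ ^ 2)⁻¹ * B = θ * I := by
    have : B = θ ^ 3 * I := by rw [hθ3]; field_simp
    rw [this]
    field_simp
  have hAθI : A ≤ θ * I := by
    have h2 : ((2 * θ) * I + (θ ^ 2)⁻¹ * ∫ t in (0:ℝ)..T, (w t ^ 2)⁻¹) / 3 ≤
        ((2 * θ) * I + (θ ^ 2)⁻¹ * B) / 3 := by
      have := mul_le_mul_of_nonneg_left hbudget (le_of_lt (inv_pos.2 (pow_pos hθ 2)))
      linarith
    have h3 : ((2 * θ) * I + (θ ^ 2)⁻¹ * B) / 3 = θ * I := by rw [hθB]; ring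
    linarith [hmono, h2]
  have hA3 : A ^ 3 ≤ B * I ^ 2 := by
    calc A ^ 3 ≤ (θ * I) ^ 3 := pow_le_pow_left₀ hApos.le hAθI 3
      _ = θ ^ 3 * I ^ 3 := by ring
      _ = B * I ^ 2 := by rw [hθ3]; field_simp
  -- final conversion
  have habs : |U T - u T| = I := by
    rw [show U T - u T = e T from rfl, heT, abs_of_pos hI]
  rw [habs]
  have hAexpr : 3 * (Real.exp (2 * lam * T / 3) - 1) / (2 * lam) = A := by
    rw [hAval]
    have : c * T = 2 * lam * T / 3 := by simp only [hc_def]; ring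
    rw [this, hc_def]
    field_simp
  rw [hAexpr]
  have hBneg : B ^ (-(1:ℝ)/2) = (B ^ ((1:ℝ)/2))⁻¹ := by
    rw [show -(1:ℝ)/2 = -((1:ℝ)/2) by ring, Real.rpow_neg hB.le]
  rw [hBneg, inv_mul_le_iff₀ (Real.rpow_pos_of_pos hB _)]
  apply le_of_pow_le_pow_left₀ (n := 2) two_ne_zero
    (mul_nonneg (Real.rpow_pos_of_pos hB _).le hI.le)
  have hA32 : (A ^ ((3:ℝ)/2)) ^ 2 = A ^ 3 := by
    rw [← Real.rpow_natCast (A ^ ((3:ℝ)/2)) 2, ← Real.rpow_mul hApos.le]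
    norm_num
  have hB12 : (B ^ ((1:ℝ)/2)) ^ 2 = B := by
    rw [← Real.rpow_natCast (B ^ ((1:ℝ)/2)) 2, ← Real.rpow_mul hB.le]
    norm_num
  calc (A ^ ((3:ℝ)/2)) ^ 2 = A ^ 3 := hA32
    _ ≤ B * I ^ 2 := hA3
    _ = (B ^ ((1:ℝ)/2) * I) ^ 2 := by rw [mul_pow, hB12]
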